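/- arXiv:1512.03049 — 2 statements merged into one kernel-verified Lean document; each statement's English description precedes it below -/
import Mathlib

section
/- The intersection of the union of the three curves E_1 ∪ E_2 ∪ E_3 with the union of the three vertical curves H_1 ∪ H_2 ∪ H_3 is exactly the set of 3n points { P_{l,m} : l ∈ {0,1,2}, m ∈ {0,1,…,n−1} }. -/
open Complex

noncomputable def ρ : ℂ := Complex.exp (2 * Real.pi * Complex.I / 3)

noncomputable def a : ℂ := (1 - ρ) / 3

noncomputable def Δn (n : ℕ) : AddSubgroup ℂ := AddSubgroup.closure {(n : ℂ), 1 - ρ}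

noncomputable def Δ : AddSubgroup ℂ := AddSubgroup.closure {1, ρ}

abbrev G : Type := ℂ ⧸ Δ

abbrev Gn (n : ℕ) : Type := ℂ ⧸ Δn n

abbrev An (n : ℕ) : Type := G × Gn n

noncomputable def mkG : ℂ → G := QuotientAddGroup.mk

noncomputable def mkGn (n : ℕ) : ℂ → Gn n := QuotientAddGroup.mk

/-- The curve E₁ = {([z], [z]ₙ)}. -/
noncomputable def E1 (n : ℕ) : Set (An n) := {p | ∃ z : ℂ, p = (mkG z, mkGn n z)}

/-- The curve E₂ = {([ρz − a], [z]ₙ)}. -/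
noncomputable def E2 (n : ℕ) : Set (An n) := {p | ∃ z : ℂ, p = (mkG (ρ * z - a), mkGn n z)}

/-- The curve E₃ = {([ρ²z − 2a], [z]ₙ)}. -/
noncomputable def E3 (n : ℕ) : Set (An n) := {p | ∃ z : ℂ, p = (mkG (ρ ^ 2 * z - 2 * a), mkGn n z)}

/-- The vertical curve H₁ = {([2/3], ζ)}. -/
noncomputable def H1 (n : ℕ) : Set (An n) := {p | ∃ ζ : Gn n, p = (mkG (2 / 3), ζ)}

/-- The vertical curve H₂ = {([2/3 + a], ζ)}. -/
noncomputable def H2 (n : ℕ) : Set (An n) := {p | ∃ ζ : Gn n, p = (mkG (2 / 3 + a), ζ)}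

/-- The vertical curve H₃ = {([2/3 + 2a], ζ)}. -/
noncomputable def H3 (n : ℕ) : Set (An n) := {p | ∃ ζ : Gn n, p = (mkG (2 / 3 + 2 * a), ζ)}

/-- The point P_{l,m} = ([2/3 + l·a], [2/3 + l·a + m]ₙ). -/
noncomputable def P (n : ℕ) (l : Fin 3) (m : Fin n) : An n :=
  (mkG (2 / 3 + (l.val : ℂ) * a), mkGn n (2 / 3 + (l.val : ℂ) * a + (m.val : ℂ)))

lemma rho_sum : ρ ^ 2 + ρ + 1 = 0 := by
  have h := Complex.isPrimitiveRoot_exp 3 (by norm_num)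
  have h3 : ρ ^ 3 = 1 := h.pow_eq_one
  have h1 : ρ ≠ 1 := h.ne_one (by norm_num)
  have hz : (ρ - 1) * (ρ ^ 2 + ρ + 1) = 0 := by linear_combination h3
  rcases mul_eq_zero.1 hz with h' | h'
  · exact absurd (sub_eq_zero.1 h') h1
  · exact h'

lemma mem_Delta_iff {x : ℂ} : x ∈ Δ ↔ ∃ u v : ℤ, x = u + v * ρ := by
  constructor
  · intro hx
    induction hx using AddSubgroup.closure_induction with
    | mem y hy =>
      rcases hy with h | h
      · exact ⟨1, 0, by simp [h]⟩
      · exact ⟨0, 1, by simp_all⟩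
    | zero => exact ⟨0, 0, by simp⟩
    | add x y hx hy ihx ihy =>
      obtain ⟨u, v, rfl⟩ := ihx
      obtain ⟨u', v', rfl⟩ := ihy
      exact ⟨u + u', v + v', by push_cast; ring⟩
    | neg x hx ih =>
      obtain ⟨u, v, rfl⟩ := ih
      exact ⟨-u, -v, by push_cast; ring⟩
  · rintro ⟨u, v, rfl⟩
    have h1 : (1 : ℂ) ∈ Δ := AddSubgroup.subset_closure (by left; rfl)
    have h2 : ρ ∈ Δ := AddSubgroup.subset_closure (by right; rfl)
    have := AddSubgroup.add_mem Δ (AddSubgroup.zsmul_mem Δ h1 u) (AddSubgroup.zsmul_mem Δ h2 v)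
    simpa [zsmul_eq_mul] using this

lemma mem_Deltan_iff {n : ℕ} {x : ℂ} : x ∈ Δn n ↔ ∃ s t : ℤ, x = s * n + t * (1 - ρ) := by
  constructor
  · intro hx
    induction hx using AddSubgroup.closure_induction with
    | mem y hy =>
      rcases hy with h | h
      · exact ⟨1, 0, by simp [h]⟩
      · exact ⟨0, 1, by simp_all⟩
    | zero => exact ⟨0, 0, by simp⟩
    | add x y hx hy ihx ihy =>
      obtain ⟨u, v, rfl⟩ := ihx
      obtain ⟨u', v', rfl⟩ := ihy
      exact ⟨u + u', v + v', by push_cast; ring⟩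
    | neg x hx ih =>
      obtain ⟨u, v, rfl⟩ := ih
      exact ⟨-u, -v, by push_cast; ring⟩
  · rintro ⟨s, t, rfl⟩
    have h1 : (n : ℂ) ∈ Δn n := AddSubgroup.subset_closure (by left; rfl)
    have h2 : (1 - ρ) ∈ Δn n := AddSubgroup.subset_closure (by right; rfl)
    have := AddSubgroup.add_mem (Δn n) (AddSubgroup.zsmul_mem (Δn n) h1 s)
      (AddSubgroup.zsmul_mem (Δn n) h2 t)
    simpa [zsmul_eq_mul] using this

lemma mkG_eq {x y : ℂ} : mkG x = mkG y ↔ x - y ∈ Δ := by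
  show (QuotientAddGroup.mk x : G) = QuotientAddGroup.mk y ↔ _
  rw [QuotientAddGroup.eq]
  constructor
  · intro h
    have := AddSubgroup.neg_mem Δ h
    convert this using 1; ring
  · intro h
    have := AddSubgroup.neg_mem Δ h
    convert this using 1; ring

lemma mkGn_eq {n : ℕ} {x y : ℂ} : mkGn n x = mkGn n y ↔ x - y ∈ Δn n := by
  show (QuotientAddGroup.mk x : Gn n) = QuotientAddGroup.mk y ↔ _
  rw [QuotientAddGroup.eq]
  constructor
  · intro h
    have := AddSubgroup.neg_mem (Δn n) h
    convert this using 1; ring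
  · intro h
    have := AddSubgroup.neg_mem (Δn n) h
    convert this using 1; ring

/-- From a decomposition `z - w = m₀ + t(1-ρ)` with integer `m₀, t`, get
`[z]ₙ = [w + m]ₙ` for some `m < n`. -/
lemma keyGn (n : ℕ) (hn : 0 < n) (z w : ℂ) (m0 t : ℤ)
    (hz : z - w = (m0 : ℂ) + (t : ℂ) * (1 - ρ)) :
    ∃ m : ℕ, m < n ∧ mkGn n z = mkGn n (w + (m : ℂ)) := by
  have hn' : (0 : ℤ) < n := by exact_mod_cast hn
  have h1 : m0 % (n : ℤ) < (n : ℤ) := Int.emod_lt_of_pos m0 hn'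
  have h2 : (0 : ℤ) ≤ m0 % (n : ℤ) := Int.emod_nonneg m0 (by omega)
  refine ⟨(m0 % (n : ℤ)).toNat, by omega, ?_⟩
  rw [mkGn_eq, mem_Deltan_iff]
  refine ⟨m0 / n, t, ?_⟩
  have hcast : (((m0 % (n : ℤ)).toNat : ℕ) : ℂ) = ((m0 % (n : ℤ) : ℤ) : ℂ) := by
    rw [← Int.cast_natCast, Int.toNat_of_nonneg h2]
  have hdiv : (m0 : ℂ) = ((m0 / n : ℤ) : ℂ) * n + ((m0 % (n : ℤ) : ℤ) : ℂ) := by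
    have h3 : ((n : ℤ) * (m0 / n) + m0 % n : ℤ) = m0 := Int.mul_ediv_add_emod m0 n
    have h4 : (((n : ℤ) * (m0 / ↑n) + m0 % ↑n : ℤ) : ℂ) = (m0 : ℂ) := by rw [h3]
    push_cast at h4
    linear_combination - h4
  rw [hcast]
  linear_combination hz + hdiv

lemma val0 : (((0 : Fin 3).val : ℕ) : ℂ) = 0 := by norm_num
lemma val1 : (((1 : Fin 3).val : ℕ) : ℂ) = 1 := by
  rw [show ((1 : Fin 3)).val = 1 from rfl]; norm_num
lemma val2 : (((2 : Fin 3).val : ℕ) : ℂ) = 2 := by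
  rw [show ((2 : Fin 3)).val = 2 from rfl]; norm_num

/-- `(E₁ ∪ E₂ ∪ E₃) ∩ (H₁ ∪ H₂ ∪ H₃)` is exactly the set of the `3n` points
`P_{l,m}`. -/
theorem stmt13 (n : ℕ) (hn : 0 < n) :
    (E1 n ∪ E2 n ∪ E3 n) ∩ (H1 n ∪ H2 n ∪ H3 n)
      = {p | ∃ (l : Fin 3) (m : Fin n), p = P n l m} := by
  have hS : ρ ^ 2 + ρ + 1 = 0 := rho_sum
  have ha : a = (1 - ρ) / 3 := rfl
  ext p
  simp only [Set.mem_inter_iff, Set.mem_union, Set.mem_setOf_eq, E1, E2, E3, H1, H2, H3]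
  constructor
  · rintro ⟨hE, hH⟩
    obtain ⟨l, ζ, hp⟩ : ∃ (l : Fin 3) (ζ : Gn n), p = (mkG (2/3 + (l.val : ℂ) * a), ζ) := by
      rcases hH with (⟨ζ, h⟩ | ⟨ζ, h⟩) | ⟨ζ, h⟩
      · exact ⟨0, ζ, by rw [h]; exact Prod.ext (congrArg mkG (by rw [val0]; ring)) rfl⟩
      · exact ⟨1, ζ, by rw [h]; exact Prod.ext (congrArg mkG (by rw [val1]; ring)) rfl⟩
      · exact ⟨2, ζ, by rw [h]; exact Prod.ext (congrArg mkG (by rw [val2])) rfl⟩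
    rcases hE with (⟨z, hz⟩ | ⟨z, hz⟩) | ⟨z, hz⟩
    · -- E1 case
      have hfst : mkG z = mkG (2/3 + (l.val : ℂ) * a) := by
        have := congrArg Prod.fst (hz.symm.trans hp); simpa using this
      obtain ⟨u, v, huv⟩ := mem_Delta_iff.1 (mkG_eq.1 hfst)
      obtain ⟨m, hmlt, hm⟩ := keyGn n hn z (2/3 + (l.val : ℂ) * a) (u + v) (-v)
        (by push_cast; linear_combination huv)
      exact ⟨l, ⟨m, hmlt⟩, by rw [hz]; exact Prod.ext hfst hm⟩
    · -- E2 case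
      have hfst : mkG (ρ * z - a) = mkG (2/3 + (l.val : ℂ) * a) := by
        have := congrArg Prod.fst (hz.symm.trans hp); simpa using this
      obtain ⟨u, v, huv⟩ := mem_Delta_iff.1 (mkG_eq.1 hfst)
      obtain ⟨m, hmlt, hm⟩ := keyGn n hn z (2/3 + (l.val : ℂ) * a)
        (v - 2*u - l.val - 3) (1 + u)
        (by
          push_cast
          linear_combination ρ^2 * huv +
            (-ρ*z - ρ/3 - ρ*(l.val:ℂ)/3 + ρ*(v:ℂ) + 4/3 + 2*(l.val:ℂ)/3 + (u:ℂ) + z - (v:ℂ)) * hS +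
            ((1 + (l.val:ℂ)) * ρ^2 - (l.val:ℂ)) * ha)
      exact ⟨l, ⟨m, hmlt⟩, by rw [hz]; exact Prod.ext hfst hm⟩
    · -- E3 case
      have hfst : mkG (ρ^2 * z - 2*a) = mkG (2/3 + (l.val : ℂ) * a) := by
        have := congrArg Prod.fst (hz.symm.trans hp); simpa using this
      obtain ⟨u, v, huv⟩ := mem_Delta_iff.1 (mkG_eq.1 hfst)
      obtain ⟨m, hmlt, hm⟩ := keyGn n hn z (2/3 + (l.val : ℂ) * a)
        (u - 2*v + l.val + 2) (v - u - l.val - 2)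
        (by
          push_cast
          linear_combination ρ * huv +
            (-ρ*z - 2/3 - (l.val:ℂ)/3 + (v:ℂ) + z) * hS +
            ((2 + (l.val:ℂ)) * ρ - (l.val:ℂ)) * ha)
      exact ⟨l, ⟨m, hmlt⟩, by rw [hz]; exact Prod.ext hfst hm⟩
  · rintro ⟨l, m, rfl⟩
    constructor
    · -- in E1
      left; left
      refine ⟨2/3 + (l.val : ℂ) * a + (m.val : ℂ), Prod.ext ?_ rfl⟩
      show mkG _ = mkG _
      rw [mkG_eq, mem_Delta_iff]
      exact ⟨-(m.val : ℤ), 0, by push_cast; ring⟩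
    · -- in H
      obtain ⟨lv, hlv⟩ := l
      interval_cases lv
      · left; left
        exact ⟨(P n ⟨0, hlv⟩ m).2,
          Prod.ext (congrArg mkG (show (2:ℂ)/3 + ((0:ℕ):ℂ) * a = 2/3 by norm_num)) rfl⟩
      · left; right
        exact ⟨(P n ⟨1, hlv⟩ m).2,
          Prod.ext (congrArg mkG (show (2:ℂ)/3 + ((1:ℕ):ℂ) * a = 2/3 + a by norm_num)) rfl⟩
      · right
        exact ⟨(P n ⟨2, hlv⟩ m).2,
          Prod.ext (congrArg mkG (show (2:ℂ)/3 + ((2:ℕ):ℂ) * a = 2/3 + 2*a by norm_num)) rfl⟩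
end

section
/- The map G_n → A_n sending [z]_n to ([z], [z]_n) is a well-defined injective group homomorphism whose image is E_1. Similarly, the maps sending [z]_n to ([ρz], [z]_n) and to ([ρ²z], [z]_n) are well-defined injective group homomorphisms, and E_2 and E_3 are, respectively, the translates of their images by the elements ([−a], 0) and ([−2a], 0) of A_n. In particular each E_i is a coset of a subgroup of A_n isomorphic to G_n. -/
open Complex

lemma rho_cube : ρ ^ 3 = 1 := by
  have h := (Complex.isPrimitiveRoot_exp 3 (by norm_num)).pow_eq_one
  simpa [ρ] using h

lemma rho_ne_one : ρ ≠ 1 := by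
  have h := Complex.isPrimitiveRoot_exp 3 (by norm_num)
  intro hc
  exact (h.pow_ne_one_of_pos_of_lt (by norm_num : (1:ℕ) ≠ 0) (by norm_num)) (by simpa [ρ] using hc)

lemma rho_sq : ρ ^ 2 = -1 - ρ := by
  have h : (ρ - 1) * (ρ ^ 2 + ρ + 1) = 0 := by linear_combination rho_cube
  rcases mul_eq_zero.1 h with h' | h'
  · exact absurd (sub_eq_zero.1 h') rho_ne_one
  · linear_combination h'

lemma one_mem_Δ : (1 : ℂ) ∈ Δ := AddSubgroup.subset_closure (by simp)
lemma rho_mem_Δ : ρ ∈ Δ := AddSubgroup.subset_closure (by simp)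

lemma mem_Δ (p q : ℤ) : (p : ℂ) + q * ρ ∈ Δ := by
  have h1 : (p : ℂ) ∈ Δ := by
    simpa using AddSubgroup.zsmul_mem Δ one_mem_Δ p
  have h2 : (q : ℂ) * ρ ∈ Δ := by
    simpa [zsmul_eq_mul] using AddSubgroup.zsmul_mem Δ rho_mem_Δ q
  exact Δ.add_mem h1 h2

/-- Key construction: if multiplication by `c` maps the generators of `Δn n` into `Δ`,
we get an injective hom `Gn n →+ An n`. -/
noncomputable def gmap (n : ℕ) (c : ℂ) (h : Δn n ≤ Δ.comap (AddMonoidHom.mulLeft c)) :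
    Gn n →+ An n :=
  (QuotientAddGroup.map (Δn n) Δ (AddMonoidHom.mulLeft c) h).prod
    (AddMonoidHom.id (Gn n))

lemma gmap_mk (n : ℕ) (c : ℂ) (h : Δn n ≤ Δ.comap (AddMonoidHom.mulLeft c)) (z : ℂ) :
    gmap n c h (mkGn n z) = (mkG (c * z), mkGn n z) := rfl

lemma gmap_inj (n : ℕ) (c : ℂ) (h : Δn n ≤ Δ.comap (AddMonoidHom.mulLeft c)) :
    Function.Injective (gmap n c h) := fun x y hxy => congrArg Prod.snd hxy

lemma le_comap (n : ℕ) (c : ℂ) (h1 : c * n ∈ Δ) (h2 : c * (1 - ρ) ∈ Δ) :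
    Δn n ≤ Δ.comap (AddMonoidHom.mulLeft c) := by
  rw [Δn, AddSubgroup.closure_le]
  rintro x (rfl | rfl) <;> simpa [AddSubgroup.mem_comap] using ‹_›

lemma mkG_surj : Function.Surjective mkG := QuotientAddGroup.mk_surjective
lemma mkGn_surj (n : ℕ) : Function.Surjective (mkGn n) := QuotientAddGroup.mk_surjective

lemma mkG_add (x y : ℂ) : mkG (x + y) = mkG x + mkG y := rfl

/-- The maps `[z]ₙ ↦ ([ρᶦz], [z]ₙ)` (`i = 0, 1, 2`) are well-defined injective group
homomorphisms `Gₙ → Aₙ`; the image of the first is `E₁`, and `E₂`, `E₃` are the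
translates of the images of the other two by `([−a], 0)` and `([−2a], 0)`.  In
particular each `Eᵢ` is a coset of a subgroup of `Aₙ` isomorphic to `Gₙ`. -/
theorem stmt14 (n : ℕ) (hn : 0 < n) :
    (∃ f : Gn n →+ An n, Function.Injective f ∧
      (∀ z : ℂ, f (mkGn n z) = (mkG z, mkGn n z)) ∧ Set.range f = E1 n) ∧
    (∃ f : Gn n →+ An n, Function.Injective f ∧
      (∀ z : ℂ, f (mkGn n z) = (mkG (ρ * z), mkGn n z)) ∧
      E2 n = (fun x => ((mkG (-a), 0) : An n) + x) '' Set.range f) ∧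
    (∃ f : Gn n →+ An n, Function.Injective f ∧
      (∀ z : ℂ, f (mkGn n z) = (mkG (ρ ^ 2 * z), mkGn n z)) ∧
      E3 n = (fun x => ((mkG (-(2 * a)), 0) : An n) + x) '' Set.range f) := by
  have h0 : Δn n ≤ Δ.comap (AddMonoidHom.mulLeft (1:ℂ)) := by
    refine le_comap n 1 ?_ ?_
    · simpa using mem_Δ n 0
    · simpa [sub_eq_add_neg] using mem_Δ 1 (-1)
  have h1 : Δn n ≤ Δ.comap (AddMonoidHom.mulLeft ρ) := by
    refine le_comap n ρ ?_ ?_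
    · have := mem_Δ 0 n; simpa [mul_comm] using this
    · have : ρ * (1 - ρ) = (1 : ℂ) + 2 * ρ := by linear_combination -rho_sq
      rw [this]; simpa using mem_Δ 1 2
  have h2 : Δn n ≤ Δ.comap (AddMonoidHom.mulLeft (ρ ^ 2)) := by
    refine le_comap n (ρ ^ 2) ?_ ?_
    · have : ρ ^ 2 * n = (-n : ℤ) + (-n : ℤ) * ρ := by
        push_cast; linear_combination (n : ℂ) * rho_sq
      rw [this]; exact mem_Δ (-n) (-n)
    · have : ρ ^ 2 * (1 - ρ) = (-2 : ℂ) + (-1) * ρ := by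
        linear_combination rho_sq - rho_cube
      rw [this]; simpa using mem_Δ (-2) (-1)
  refine ⟨⟨gmap n 1 h0, gmap_inj n 1 h0, fun z => by simpa using gmap_mk n 1 h0 z, ?_⟩,
    ⟨gmap n ρ h1, gmap_inj n ρ h1, gmap_mk n ρ h1, ?_⟩,
    ⟨gmap n (ρ ^ 2) h2, gmap_inj n (ρ ^ 2) h2, gmap_mk n (ρ ^ 2) h2, ?_⟩⟩
  · ext p
    constructor
    · rintro ⟨x, rfl⟩
      obtain ⟨z, rfl⟩ := mkGn_surj n x
      exact ⟨z, by simpa using (gmap_mk n 1 h0 z)⟩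
    · rintro ⟨z, rfl⟩
      exact ⟨mkGn n z, by simpa using gmap_mk n 1 h0 z⟩
  · ext p
    constructor
    · rintro ⟨z, rfl⟩
      refine ⟨(mkG (ρ * z), mkGn n z), ⟨mkGn n z, gmap_mk n ρ h1 z⟩, ?_⟩
      have : mkG (ρ * z - a) = mkG (-a) + mkG (ρ * z) := by
        rw [← mkG_add]; ring_nf
      simp [Prod.ext_iff, this]
    · rintro ⟨q, ⟨x, rfl⟩, rfl⟩
      obtain ⟨z, rfl⟩ := mkGn_surj n x
      refine ⟨z, ?_⟩
      rw [gmap_mk n ρ h1 z]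
      have : mkG (ρ * z - a) = mkG (-a) + mkG (ρ * z) := by
        rw [← mkG_add]; ring_nf
      simp [Prod.ext_iff, this]
  · ext p
    constructor
    · rintro ⟨z, rfl⟩
      refine ⟨(mkG (ρ ^ 2 * z), mkGn n z), ⟨mkGn n z, gmap_mk n (ρ ^ 2) h2 z⟩, ?_⟩
      have : mkG (ρ ^ 2 * z - 2 * a) = mkG (-(2 * a)) + mkG (ρ ^ 2 * z) := by
        rw [← mkG_add]; ring_nf
      simp [Prod.ext_iff, this]
    · rintro ⟨q, ⟨x, rfl⟩, rfl⟩
      obtain ⟨z, rfl⟩ := mkGn_surj n x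
      refine ⟨z, ?_⟩
      rw [gmap_mk n (ρ ^ 2) h2 z]
      have : mkG (ρ ^ 2 * z - 2 * a) = mkG (-(2 * a)) + mkG (ρ ^ 2 * z) := by
        rw [← mkG_add]; ring_nf
      simp [Prod.ext_iff, this]
end
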